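/- arXiv:math/0206081 — 8 statements merged into one kernel-verified Lean document; each statement's English description precedes it below -/
import Mathlib

section
/- Let p, q be natural numbers and u₀, u₁, u₂ ∈ H̃ satisfy |u₀|² + |u₁|² + |u₂|² = 1 and q·ū₀ j u₀ + p·ū₁ j u₁ + p·ū₂ j u₂ = 0. Then for every t ∈ ℝ: q·ū₀ j e^{jqt} u₀ + p·ū₁ j e^{jpt} u₁ + p·ū₂ j e^{jpt} u₂ = |u₀|²·(q·sinh(qt) − p·sinh(pt)) + p·sinh(pt) + q·(cosh(qt) − cosh(pt))·(ū₀ j u₀), where the real summands are understood via the embedding ℝ → H̃. -/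
open Quaternion

noncomputable section

/-- The square norm `|q|² = q q̄` of a para-quaternion `q ∈ H̃ = ℍ[ℝ, -1, 1]`. -/
def pnormSq (q : ℍ[ℝ, -1, 1]) : ℝ := (q * star q).re

/-- The imaginary unit `j` of the para-quaternions `H̃ = ℍ[ℝ, -1, 1]` (with `j² = 1`). -/
def jq : ℍ[ℝ, -1, 1] := ⟨0, 0, 1, 0⟩

/-- `e^{jt} = cosh t + (sinh t)·j` as a para-quaternion. -/
def pexp (t : ℝ) : ℍ[ℝ, -1, 1] := ⟨Real.cosh t, 0, Real.sinh t, 0⟩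

/-- The key identity in the proof that the ℝ-action `φ_t` acts freely on `K₀`:
if `|u₀|² + |u₁|² + |u₂|² = 1` and `q ū₀ j u₀ + p ū₁ j u₁ + p ū₂ j u₂ = 0`, then
`q ū₀ j e^{jqt} u₀ + p ū₁ j e^{jpt} u₁ + p ū₂ j e^{jpt} u₂
  = |u₀|² (q sinh qt − p sinh pt) + p sinh pt + q (cosh qt − cosh pt) ū₀ j u₀`. -/
theorem key_free_action_identity (p q : ℕ) (u₀ u₁ u₂ : ℍ[ℝ, -1, 1])
    (hnorm : pnormSq u₀ + pnormSq u₁ + pnormSq u₂ = 1)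
    (hK : (q : ℍ[ℝ, -1, 1]) * (star u₀ * jq * u₀) + (p : ℍ[ℝ, -1, 1]) * (star u₁ * jq * u₁)
        + (p : ℍ[ℝ, -1, 1]) * (star u₂ * jq * u₂) = 0)
    (t : ℝ) :
    (q : ℍ[ℝ, -1, 1]) * (star u₀ * jq * pexp ((q : ℝ) * t) * u₀)
      + (p : ℍ[ℝ, -1, 1]) * (star u₁ * jq * pexp ((p : ℝ) * t) * u₁)
      + (p : ℍ[ℝ, -1, 1]) * (star u₂ * jq * pexp ((p : ℝ) * t) * u₂)
    = ((pnormSq u₀ * ((q : ℝ) * Real.sinh ((q : ℝ) * t) - (p : ℝ) * Real.sinh ((p : ℝ) * t))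
          + (p : ℝ) * Real.sinh ((p : ℝ) * t) : ℝ) : ℍ[ℝ, -1, 1])
      + (((q : ℝ) * (Real.cosh ((q : ℝ) * t) - Real.cosh ((p : ℝ) * t)) : ℝ) : ℍ[ℝ, -1, 1])
          * (star u₀ * jq * u₀) := by
  rw [QuaternionAlgebra.ext_iff] at hK
  simp only [jq, pnormSq, QuaternionAlgebra.re_add, QuaternionAlgebra.imI_add,
    QuaternionAlgebra.imJ_add, QuaternionAlgebra.imK_add, QuaternionAlgebra.re_mul,
    QuaternionAlgebra.imI_mul,
    QuaternionAlgebra.imJ_mul, QuaternionAlgebra.imK_mul, QuaternionAlgebra.re_star,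
    QuaternionAlgebra.imI_star, QuaternionAlgebra.imJ_star, QuaternionAlgebra.imK_star,
    QuaternionAlgebra.re_natCast, QuaternionAlgebra.imI_natCast, QuaternionAlgebra.imJ_natCast,
    QuaternionAlgebra.imK_natCast, QuaternionAlgebra.re_zero, QuaternionAlgebra.imI_zero,
    QuaternionAlgebra.imJ_zero, QuaternionAlgebra.imK_zero, zero_mul, mul_zero, add_zero, sub_zero] at hK hnorm
  obtain ⟨h1, h2, h3, h4⟩ := hK
  ext <;>
    simp only [jq, pexp, pnormSq, QuaternionAlgebra.re_add, QuaternionAlgebra.imI_add,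
      QuaternionAlgebra.imJ_add, QuaternionAlgebra.imK_add, QuaternionAlgebra.re_mul,
      QuaternionAlgebra.imI_mul, QuaternionAlgebra.imJ_mul, QuaternionAlgebra.imK_mul,
      QuaternionAlgebra.re_star, QuaternionAlgebra.imI_star, QuaternionAlgebra.imJ_star,
      QuaternionAlgebra.imK_star, QuaternionAlgebra.re_natCast, QuaternionAlgebra.imI_natCast,
      QuaternionAlgebra.imJ_natCast, QuaternionAlgebra.imK_natCast,
      QuaternionAlgebra.re_coe, QuaternionAlgebra.imI_coe, QuaternionAlgebra.imJ_coe,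
      QuaternionAlgebra.imK_coe, zero_mul, mul_zero, add_zero, sub_zero]
  · linear_combination Real.cosh ((p:ℝ)*t) * h1 + (p:ℝ) * Real.sinh ((p:ℝ)*t) * hnorm
  · linear_combination Real.cosh ((p:ℝ)*t) * h2
  · linear_combination Real.cosh ((p:ℝ)*t) * h3
  · linear_combination Real.cosh ((p:ℝ)*t) * h4
end
end

section
/- (Freeness of the action, Lemma 3.1.) Let p, q be coprime natural numbers with p ≠ q, p, q ≥ 1, and let u₀, u₁, u₂ ∈ H̃ satisfy |u₀|² + |u₁|² + |u₂|² = 1 and q·ū₀ j u₀ + p·ū₁ j u₁ + p·ū₂ j u₂ = 0. If t ∈ ℝ and h ∈ H̃ with |h|² = 1 satisfy e^{jqt}u₀ = u₀·h, e^{jpt}u₁ = u₁·h, and e^{jpt}u₂ = u₂·h, then t = 0. -/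
open Quaternion

noncomputable section

lemma star_mul_self' (w : ℍ[ℝ,-1,1]) : star w * w = pnormSq w • (1 : ℍ[ℝ,-1,1]) := by
  ext <;> simp [pnormSq] <;> ring

lemma pexp_mul (c : ℝ) (u : ℍ[ℝ,-1,1]) :
    pexp c * u = Real.cosh c • u + Real.sinh c • (jq * u) := by
  ext <;> simp [pexp, jq] <;> ring

lemma keyE (c : ℝ) (u v : ℍ[ℝ,-1,1]) (hu : pexp c * u = u * v) :
    Real.sinh c • (star u * jq * u)
      = pnormSq u • v - (pnormSq u * Real.cosh c) • (1 : ℍ[ℝ,-1,1]) := by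
  have h1 : star u * (pexp c * u) = star u * (u * v) := by rw [hu]
  rw [pexp_mul, mul_add, mul_smul_comm, mul_smul_comm, ← mul_assoc, ← mul_assoc,
    star_mul_self', smul_mul_assoc, one_mul] at h1
  linear_combination (norm := module) h1

lemma natCast_mul_eq_smul (n : ℕ) (v : ℍ[ℝ,-1,1]) :
    (n : ℍ[ℝ,-1,1]) * v = (n:ℝ) • v := by ext <;> simp

lemma pnormSq_pexp_sub (c m : ℝ) :
    pnormSq (pexp m - c • 1) = 2*(1 - c*Real.cosh m) + (c^2 - 1) := by
  have h := Real.cosh_sq_sub_sinh_sq m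
  simp [pnormSq, pexp]
  ring_nf
  linear_combination h

lemma pnormSq_smul_one (c : ℝ) : pnormSq (c • (1:ℍ[ℝ,-1,1])) = c^2 := by
  simp [pnormSq]; ring

lemma eq_zero_of_mul (w u : ℍ[ℝ,-1,1]) (hw : pnormSq w ≠ 0) (h : w * u = 0) : u = 0 := by
  have h1 : star w * (w * u) = 0 := by rw [h, mul_zero]
  rw [← mul_assoc, star_mul_self', smul_mul_assoc, one_mul] at h1
  simpa [smul_eq_zero, hw] using h1

set_option maxHeartbeats 2000000 in
/-- Freeness of the action (Lemma 3.1): if `p ≠ q` are coprime positive naturals,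
`(u₀,u₁,u₂)` lies on the pseudo-sphere and satisfies the defining equation of `K₀`,
and `φ_t(u) = u·h` for some unit para-quaternion `h`, then `t = 0`. -/
theorem action_free (p q : ℕ) (hpq : Nat.Coprime p q) (hne : p ≠ q)
    (hp : 1 ≤ p) (hq : 1 ≤ q)
    (u₀ u₁ u₂ : ℍ[ℝ, -1, 1])
    (hnorm : pnormSq u₀ + pnormSq u₁ + pnormSq u₂ = 1)
    (hK : (q : ℍ[ℝ, -1, 1]) * (star u₀ * jq * u₀) + (p : ℍ[ℝ, -1, 1]) * (star u₁ * jq * u₁)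
        + (p : ℍ[ℝ, -1, 1]) * (star u₂ * jq * u₂) = 0)
    (t : ℝ) (h : ℍ[ℝ, -1, 1]) (hh : pnormSq h = 1)
    (h₀ : pexp ((q : ℝ) * t) * u₀ = u₀ * h)
    (h₁ : pexp ((p : ℝ) * t) * u₁ = u₁ * h)
    (h₂ : pexp ((p : ℝ) * t) * u₂ = u₂ * h) :
    t = 0 := by
  by_contra ht
  have hq' : (q:ℝ) ≠ 0 := Nat.cast_ne_zero.2 (by omega)
  have hp' : (p:ℝ) ≠ 0 := Nat.cast_ne_zero.2 (by omega)
  have hqt : (q:ℝ) * t ≠ 0 := mul_ne_zero hq' ht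
  have hpt : (p:ℝ) * t ≠ 0 := mul_ne_zero hp' ht
  have hs : Real.sinh ((q:ℝ)*t) ≠ 0 := Real.sinh_ne_zero.2 hqt
  have hr : Real.sinh ((p:ℝ)*t) ≠ 0 := Real.sinh_ne_zero.2 hpt
  set a := Real.cosh ((q:ℝ)*t) with ha
  set b := Real.cosh ((p:ℝ)*t) with hb
  set s := Real.sinh ((q:ℝ)*t) with hsdef
  set r := Real.sinh ((p:ℝ)*t) with hrdef
  have hab : a ≠ b := by
    intro hEq
    have l1 : |(q:ℝ)*t| ≤ |(p:ℝ)*t| := Real.cosh_le_cosh.mp hEq.le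
    have l2 : |(p:ℝ)*t| ≤ |(q:ℝ)*t| := Real.cosh_le_cosh.mp hEq.ge
    have l3 : |(q:ℝ)*t| = |(p:ℝ)*t| := le_antisymm l1 l2
    rw [abs_mul, abs_mul, Nat.abs_cast, Nat.abs_cast] at l3
    have l4 : (q:ℝ) = (p:ℝ) := mul_right_cancel₀ (abs_ne_zero.2 ht) l3
    exact hne (by exact_mod_cast l4.symm)
  have E0 := keyE ((q:ℝ)*t) u₀ h h₀
  have E1 := keyE ((p:ℝ)*t) u₁ h h₁
  have E2 := keyE ((p:ℝ)*t) u₂ h h₂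
  have K' : (q:ℝ) • (star u₀ * jq * u₀) + (p:ℝ) • (star u₁ * jq * u₁)
      + (p:ℝ) • (star u₂ * jq * u₂) = 0 := by
    rw [← natCast_mul_eq_smul, ← natCast_mul_eq_smul, ← natCast_mul_eq_smul]; exact hK
  have main : ((q:ℝ)*r*pnormSq u₀ + (p:ℝ)*s*(pnormSq u₁+pnormSq u₂)) • h
      = ((q:ℝ)*r*(pnormSq u₀*a) + (p:ℝ)*s*(pnormSq u₁*b+pnormSq u₂*b)) • (1 : ℍ[ℝ,-1,1]) := by
    linear_combination (norm := module)
      (-((q:ℝ)*r)) • E0 + (-((p:ℝ)*s)) • E1 + (-((p:ℝ)*s)) • E2 + (s*r) • K'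
  set C := (q:ℝ)*r*pnormSq u₀ + (p:ℝ)*s*(pnormSq u₁+pnormSq u₂) with hCdef
  set D := (q:ℝ)*r*(pnormSq u₀*a) + (p:ℝ)*s*(pnormSq u₁*b+pnormSq u₂*b) with hDdef
  rcases eq_or_ne C 0 with hC | hC
  · -- degenerate case: forces pnormSq u₀ = 0 and pnormSq u₁ + pnormSq u₂ = 0, contradicting hnorm
    rw [hC, zero_smul] at main
    have hD : D = 0 := by
      have := congrArg QuaternionAlgebra.re main.symm
      simpa using this
    have h1 : (q:ℝ)*r*pnormSq u₀*(a-b) = 0 := by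
      rw [hCdef] at hC; rw [hDdef] at hD; linear_combination hD - b * hC
    have hn0 : pnormSq u₀ = 0 := by
      by_contra hn
      exact (mul_ne_zero (mul_ne_zero (mul_ne_zero hq' hr) hn) (sub_ne_zero.2 hab)) h1
    have hn12 : pnormSq u₁ + pnormSq u₂ = 0 := by
      rw [hCdef, hn0] at hC
      have h2 : (p:ℝ)*s*(pnormSq u₁+pnormSq u₂) = 0 := by linear_combination hC
      rcases mul_eq_zero.1 h2 with h3 | h3
      · exact absurd h3 (mul_ne_zero hp' hs)
      · exact h3
    rw [hn0] at hnorm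
    linarith
  · -- nondegenerate case: h is a real scalar c with c² = 1
    have hh₀ := h₀
    have hh₁ := h₁
    have hh₂ := h₂
    have hex : ∃ c : ℝ, h = c • (1 : ℍ[ℝ,-1,1]) := by
      refine ⟨C⁻¹ * D, ?_⟩
      have h1 := congrArg (fun x => C⁻¹ • x) main
      simpa [smul_smul, inv_mul_cancel₀ hC] using h1
    obtain ⟨c, hhc⟩ := hex
    clear main hC hCdef hDdef E0 E1 E2 K' hK hab h₀ h₁ h₂
    clear_value C D
    clear C D
    clear_value a b s r
    clear a b s r hs hr hsdef hrdef ha hb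
    have hc2 : c^2 = 1 := by
      rw [hhc, pnormSq_smul_one] at hh
      exact hh
    have key2 : ∀ (m:ℕ), 1 ≤ m → ∀ u : ℍ[ℝ,-1,1],
        pexp ((m:ℝ)*t) * u = u * h → u = 0 := by
      intro m hm u hu
      have hmt : (m:ℝ) * t ≠ 0 := mul_ne_zero (Nat.cast_ne_zero.2 (by omega)) ht
      have hcosh : 1 < Real.cosh ((m:ℝ)*t) := Real.one_lt_cosh.2 hmt
      rw [hhc] at hu
      have hu' : (pexp ((m:ℝ)*t) - c • 1) * u = 0 := by
        rw [sub_mul, hu, smul_mul_assoc, one_mul, mul_smul_comm, mul_one, sub_self]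
      apply eq_zero_of_mul _ _ _ hu'
      rw [pnormSq_pexp_sub]
      rw [hc2]
      have hcc : c = 1 ∨ c = -1 := by
        have : (c-1)*(c+1) = 0 := by linear_combination hc2
        rcases mul_eq_zero.1 this with h3 | h3
        · left; linarith
        · right; linarith
      rcases hcc with h3 | h3 <;> rw [h3] <;> nlinarith [hcosh]
    have z0 := key2 q hq u₀ hh₀
    have z1 := key2 p hp u₁ hh₁
    have z2 := key2 p hp u₂ hh₂
    rw [z0, z1, z2] at hnorm
    simp [pnormSq] at hnorm
end
end

section
/- Let n, a, b, c, C be real numbers with n ≠ 0, and set s := −a² + b² + c². Let K be the 3×3 real matrix K = (2/n²)·[[2a² + b² + c² − Cn²/2, −3ab, −3ac], [3ab, −a² − 2b² + c² − Cn²/2, −3bc], [3ac, −3bc, −a² + b² − 2c² − Cn²/2]]. Then the characteristic polynomial of K factors as (X − μ)²·(X − ν), where μ = 2s/n² − C and ν = −4s/n² − C. In particular K has exactly one eigenvalue of (algebraic) multiplicity two and one simple eigenvalue whenever s ≠ 0. -/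
open Polynomial

noncomputable section

lemma charpoly_fin3_aux (M : Matrix (Fin 3) (Fin 3) ℝ) :
    M.charpoly = X ^ 3 - Polynomial.C (M 0 0 + M 1 1 + M 2 2) * X ^ 2
      + Polynomial.C (M 0 0 * M 1 1 + M 0 0 * M 2 2 + M 1 1 * M 2 2
          - M 0 1 * M 1 0 - M 0 2 * M 2 0 - M 1 2 * M 2 1) * X
      - Polynomial.C (M 0 0 * (M 1 1 * M 2 2 - M 1 2 * M 2 1)
          - M 0 1 * (M 1 0 * M 2 2 - M 1 2 * M 2 0)
          + M 0 2 * (M 1 0 * M 2 1 - M 1 1 * M 2 0)) := by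
  rw [Matrix.charpoly, Matrix.det_fin_three]
  simp [Matrix.charmatrix_apply_eq, Matrix.charmatrix_apply_ne, Matrix.charmatrix]
  ring

/-- The characteristic polynomial of the matrix of the Jacobi operator (restricted to the
orthogonal complement of the unit direction, in the basis `(J₁X, J₂X, J₃X)`) factors as
`(X − μ)² (X − ν)` with `μ = 2s/n² − C`, `ν = −4s/n² − C`, `s = −a² + b² + c²`; in
particular it has a double and a simple eigenvalue whenever `s ≠ 0`. -/
theorem jacobi_matrix_charpoly (n a b c C : ℝ) (hn : n ≠ 0) :
    let s : ℝ := -a ^ 2 + b ^ 2 + c ^ 2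
    let K : Matrix (Fin 3) (Fin 3) ℝ :=
      (2 / n ^ 2) •
        !![2 * a ^ 2 + b ^ 2 + c ^ 2 - C * n ^ 2 / 2, -3 * a * b, -3 * a * c;
           3 * a * b, -a ^ 2 - 2 * b ^ 2 + c ^ 2 - C * n ^ 2 / 2, -3 * b * c;
           3 * a * c, -3 * b * c, -a ^ 2 + b ^ 2 - 2 * c ^ 2 - C * n ^ 2 / 2]
    let μ : ℝ := 2 * s / n ^ 2 - C
    let ν : ℝ := -4 * s / n ^ 2 - C
    K.charpoly = (X - Polynomial.C μ) ^ 2 * (X - Polynomial.C ν) ∧ (s ≠ 0 → μ ≠ ν) := by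
  intro s K μ ν
  have hn2 : n ^ 2 ≠ 0 := pow_ne_zero _ hn
  constructor
  · have expand : (X - Polynomial.C μ) ^ 2 * (X - Polynomial.C ν)
        = X ^ 3 - Polynomial.C (2 * μ + ν) * X ^ 2
          + Polynomial.C (μ ^ 2 + 2 * μ * ν) * X - Polynomial.C (μ ^ 2 * ν) := by
      simp only [map_add, map_mul, map_pow, map_ofNat]
      ring
    rw [charpoly_fin3_aux, expand]
    have e1 : K 0 0 + K 1 1 + K 2 2 = 2 * μ + ν := by
      simp only [K, μ, ν, s, Matrix.smul_apply, Matrix.cons_val', Matrix.cons_val_zero,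
        Matrix.cons_val_one, Matrix.head_cons, Matrix.empty_val', Matrix.cons_val_fin_one,
        Matrix.head_fin_const, Matrix.cons_val_two, Matrix.tail_cons,
        Matrix.of_apply, smul_eq_mul]
      field_simp
      ring
    have e2 : K 0 0 * K 1 1 + K 0 0 * K 2 2 + K 1 1 * K 2 2
        - K 0 1 * K 1 0 - K 0 2 * K 2 0 - K 1 2 * K 2 1 = μ ^ 2 + 2 * μ * ν := by
      simp only [K, μ, ν, s, Matrix.smul_apply, Matrix.cons_val', Matrix.cons_val_zero,
        Matrix.cons_val_one, Matrix.head_cons, Matrix.empty_val', Matrix.cons_val_fin_one,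
        Matrix.head_fin_const, Matrix.cons_val_two, Matrix.tail_cons,
        Matrix.of_apply, smul_eq_mul]
      field_simp
      ring
    have e3 : K 0 0 * (K 1 1 * K 2 2 - K 1 2 * K 2 1)
        - K 0 1 * (K 1 0 * K 2 2 - K 1 2 * K 2 0)
        + K 0 2 * (K 1 0 * K 2 1 - K 1 1 * K 2 0) = μ ^ 2 * ν := by
      simp only [K, μ, ν, s, Matrix.smul_apply, Matrix.cons_val', Matrix.cons_val_zero,
        Matrix.cons_val_one, Matrix.head_cons, Matrix.empty_val', Matrix.cons_val_fin_one,
        Matrix.head_fin_const, Matrix.cons_val_two, Matrix.tail_cons,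
        Matrix.of_apply, smul_eq_mul]
      field_simp
      ring
    rw [e1, e2, e3]
  · intro hs h
    apply hs
    have h6 : μ - ν = 6 * s / n ^ 2 := by simp only [μ, ν]; ring
    rw [h, sub_self] at h6
    field_simp at h6
    linarith
end
end

section
/- Let p ≠ q be coprime natural numbers with p, q ≥ 1. Then there exist triples u = (u₀,u₁,u₂) and u' = (u₀',u₁',u₂') in H̃³, each satisfying |u₀|² + |u₁|² + |u₂|² = 1 and q·ū₀ j u₀ + p·ū₁ j u₁ + p·ū₂ j u₂ = 0, such that q²|u₀|² + p²|u₁|² + p²|u₂|² = p² and q²|u₀'|² + p²|u₁'|² + p²|u₂'|² = p·q; in particular both values are nonzero and distinct, so the function n² = q²|u₀|² + p²|u₁|² + p²|u₂|² is a nonconstant function on K₀. -/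
open Quaternion

noncomputable section

lemma pnormSq_mk (x y z w : ℝ) : pnormSq ⟨x,y,z,w⟩ = x^2 + y^2 - z^2 - w^2 := by
  simp [pnormSq, QuaternionAlgebra.re_mul]
  ring

lemma star_jq_re (x : ℝ) : star (⟨x,0,0,0⟩ : ℍ[ℝ,-1,1]) * jq * ⟨x,0,0,0⟩ = ⟨0,0,x^2,0⟩ := by
  ext <;> (simp [jq, QuaternionAlgebra.re_mul]; try ring)

lemma star_jq_im (x : ℝ) : star (⟨0,x,0,0⟩ : ℍ[ℝ,-1,1]) * jq * ⟨0,x,0,0⟩ = ⟨0,0,-x^2,0⟩ := by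
  ext <;> (simp [jq, QuaternionAlgebra.re_mul]; try ring)

lemma pnormSq_zero : pnormSq (0 : ℍ[ℝ,-1,1]) = 0 := by
  simp [pnormSq]

lemma natCast_mul_mk (n : ℕ) (x y z w : ℝ) :
    (n : ℍ[ℝ,-1,1]) * ⟨x,y,z,w⟩ = ⟨n*x, n*y, n*z, n*w⟩ := by
  ext <;> simp [QuaternionAlgebra.re_mul]

/-- Non-constancy of `n² = q²|u₀|² + p²|u₁|² + p²|u₂|²` along `K₀`: there are two points
of `K₀` (triples on the pseudo-sphere satisfying the defining equation) at which `n²` takes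
the distinct nonzero values `p²` and `pq`. -/
theorem nSq_nonconstant_on_K0 (p q : ℕ) (hpq : Nat.Coprime p q) (hne : p ≠ q)
    (hp : 1 ≤ p) (hq : 1 ≤ q) :
    ∃ u₀ u₁ u₂ u₀' u₁' u₂' : ℍ[ℝ, -1, 1],
      (pnormSq u₀ + pnormSq u₁ + pnormSq u₂ = 1) ∧
      ((q : ℍ[ℝ, -1, 1]) * (star u₀ * jq * u₀) + (p : ℍ[ℝ, -1, 1]) * (star u₁ * jq * u₁)
          + (p : ℍ[ℝ, -1, 1]) * (star u₂ * jq * u₂) = 0) ∧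
      (pnormSq u₀' + pnormSq u₁' + pnormSq u₂' = 1) ∧
      ((q : ℍ[ℝ, -1, 1]) * (star u₀' * jq * u₀') + (p : ℍ[ℝ, -1, 1]) * (star u₁' * jq * u₁')
          + (p : ℍ[ℝ, -1, 1]) * (star u₂' * jq * u₂') = 0) ∧
      ((q : ℝ) ^ 2 * pnormSq u₀ + (p : ℝ) ^ 2 * pnormSq u₁ + (p : ℝ) ^ 2 * pnormSq u₂
          = (p : ℝ) ^ 2) ∧
      ((q : ℝ) ^ 2 * pnormSq u₀' + (p : ℝ) ^ 2 * pnormSq u₁' + (p : ℝ) ^ 2 * pnormSq u₂'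
          = (p : ℝ) * q) ∧
      ((p : ℝ) ^ 2 ≠ 0 ∧ (p : ℝ) * q ≠ 0 ∧ (p : ℝ) ^ 2 ≠ (p : ℝ) * q) := by
  have hp0 : (0:ℝ) < p := by exact_mod_cast hp
  have hq0 : (0:ℝ) < q := by exact_mod_cast hq
  have hs0 : (0:ℝ) < (p:ℝ) + q := by linarith
  obtain ⟨r, hr2⟩ : ∃ r : ℝ, r^2 = 1/2 := ⟨Real.sqrt (1/2), Real.sq_sqrt (by norm_num)⟩
  obtain ⟨a, ha2⟩ : ∃ a : ℝ, a^2 = (p:ℝ)/((p:ℝ)+q) :=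
    ⟨Real.sqrt _, Real.sq_sqrt (by positivity)⟩
  obtain ⟨b, hb2⟩ : ∃ b : ℝ, b^2 = (q:ℝ)/((p:ℝ)+q) :=
    ⟨Real.sqrt _, Real.sq_sqrt (by positivity)⟩
  have key1 : a^2 + b^2 = 1 := by rw [ha2, hb2]; field_simp
  have key2 : (q:ℝ)^2 * a^2 + (p:ℝ)^2 * b^2 = (p:ℝ) * q := by
    rw [ha2, hb2]; field_simp; ring
  refine ⟨0, ⟨r,0,0,0⟩, ⟨0,r,0,0⟩, ⟨a,0,0,0⟩, 0, ⟨0,b,0,0⟩, ?_, ?_, ?_, ?_, ?_, ?_, ?_, ?_, ?_⟩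
  · rw [pnormSq_zero, pnormSq_mk, pnormSq_mk]
    nlinarith [hr2]
  · rw [star_jq_re, star_jq_im]
    ext <;> simp
  · rw [pnormSq_mk, pnormSq_zero, pnormSq_mk]
    nlinarith [key1]
  · rw [star_jq_re, star_jq_im]
    ext <;> simp [ha2, hb2] <;> field_simp <;> ring
  · rw [pnormSq_zero, pnormSq_mk, pnormSq_mk]
    nlinarith [hr2]
  · rw [pnormSq_mk, pnormSq_zero, pnormSq_mk]
    nlinarith [key2]
  · positivity
  · positivity
  · have hpq' : (p:ℝ) ≠ (q:ℝ) := by exact_mod_cast fun h => hne (Nat.cast_injective h)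
    intro h
    exact hpq' (mul_left_cancel₀ (ne_of_gt hp0) (by linear_combination h))
end
end

section
/- Let p, q be positive real numbers satisfying p² < √2·q² and √2·q² < 2√2·p² (equivalently p² < √2 q² and q² < 2p²). Then for every real m with min(p²,q²) ≤ m ≤ max(p²,q²), one has 4 − 2p⁴q²/m³ > 0 (and also 4 + 4p⁴q²/m³ > 0). Consequently all sectional curvatures of the orbifold O_{p,q}(1), which lie in the interval [4 − 2p⁴q²/m³, 4 + 4p⁴q²/m³], are positive. -/
/-- Positivity of the sectional curvature of `O_{p,q}(1)` (Theorem 6.3): if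
`p² < √2·q²` and `√2·q² < 2√2·p²`, then for every `m` with
`min(p², q²) ≤ m ≤ max(p², q²)` both curvature bounds `4 − 2p⁴q²/m³` and
`4 + 4p⁴q²/m³` are positive. -/
theorem positive_sectional_curvature (p q : ℝ) (hp : 0 < p) (hq : 0 < q)
    (h₁ : p ^ 2 < Real.sqrt 2 * q ^ 2) (h₂ : Real.sqrt 2 * q ^ 2 < 2 * Real.sqrt 2 * p ^ 2) :
    ∀ m : ℝ, min (p ^ 2) (q ^ 2) ≤ m → m ≤ max (p ^ 2) (q ^ 2) →
      0 < 4 - 2 * p ^ 4 * q ^ 2 / m ^ 3 ∧ 0 < 4 + 4 * p ^ 4 * q ^ 2 / m ^ 3 := by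
  have hs : Real.sqrt 2 ^ 2 = 2 := Real.sq_sqrt (by norm_num)
  have hs0 : (0:ℝ) < Real.sqrt 2 := Real.sqrt_pos.2 (by norm_num)
  -- from h₁ : p⁴ < 2 q⁴
  have hA : p ^ 4 < 2 * q ^ 4 := by
    have h := mul_lt_mul'' h₁ h₁ (by positivity) (by positivity)
    nlinarith [hs]
  -- from h₂ : q² < 2 p²
  have hB : q ^ 2 < 2 * p ^ 2 := by
    nlinarith [hs0, hs]
  intro m hm1 hm2
  have hmin : (0:ℝ) < min (p ^ 2) (q ^ 2) := lt_min (by positivity) (by positivity)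
  have hm0 : 0 < m := lt_of_lt_of_le hmin hm1
  have key : p ^ 4 * q ^ 2 < 2 * m ^ 3 := by
    rcases le_total (q ^ 2) (p ^ 2) with h | h
    · have hq2m : q ^ 2 ≤ m := (min_eq_right h) ▸ hm1
      nlinarith [pow_le_pow_left₀ (sq_nonneg q) hq2m 3,
        mul_lt_mul_of_pos_right hA (show (0:ℝ) < q ^ 2 by positivity)]
    · have hp2m : p ^ 2 ≤ m := (min_eq_left h) ▸ hm1
      nlinarith [pow_le_pow_left₀ (sq_nonneg p) hp2m 3,
        mul_lt_mul_of_pos_left hB (show (0:ℝ) < p ^ 4 by positivity)]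
  constructor
  · have : 2 * p ^ 4 * q ^ 2 / m ^ 3 < 4 := by
      rw [div_lt_iff₀ (by positivity)]
      nlinarith [key]
    linarith
  · have : 0 ≤ 4 * p ^ 4 * q ^ 2 / m ^ 3 := by positivity
    linarith
end

section
/- Let p, q be positive real numbers with p ≤ q and p² < √2·q² < 2√2·p². For real m with p² ≤ m ≤ q² define k(m) := (4 − 2p⁴q²/m³)/(4 + 4p⁴q²/m³). Then for every such m: 1/4 − (3/4)·(q² − p²)/(p² + q²) ≤ k(m) ≤ 1/4 + (3/4)·(q⁴ − p⁴)/(p⁴ + q⁴). -/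
/-- Pinching bounds for `O_{p,q}(1)` in the case `p ≤ q` (Lemma 6.4): with
`k(m) = (4 − 2p⁴q²/m³)/(4 + 4p⁴q²/m³)` and `p² ≤ m ≤ q²`,
`1/4 − (3/4)(q² − p²)/(p² + q²) ≤ k(m) ≤ 1/4 + (3/4)(q⁴ − p⁴)/(p⁴ + q⁴)`. -/
theorem pinching_bounds_p_le_q (p q : ℝ) (hp : 0 < p) (hq : 0 < q) (hpq : p ≤ q)
    (h₁ : p ^ 2 < Real.sqrt 2 * q ^ 2) (h₂ : Real.sqrt 2 * q ^ 2 < 2 * Real.sqrt 2 * p ^ 2) :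
    ∀ m : ℝ, p ^ 2 ≤ m → m ≤ q ^ 2 →
      1 / 4 - 3 / 4 * ((q ^ 2 - p ^ 2) / (p ^ 2 + q ^ 2))
          ≤ (4 - 2 * p ^ 4 * q ^ 2 / m ^ 3) / (4 + 4 * p ^ 4 * q ^ 2 / m ^ 3) ∧
      (4 - 2 * p ^ 4 * q ^ 2 / m ^ 3) / (4 + 4 * p ^ 4 * q ^ 2 / m ^ 3)
          ≤ 1 / 4 + 3 / 4 * ((q ^ 4 - p ^ 4) / (p ^ 4 + q ^ 4)) := by
  intro m hm1 hm2
  have hm : (0:ℝ) < m := lt_of_lt_of_le (pow_pos hp 2) hm1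
  have hm3 : (0:ℝ) < m ^ 3 := pow_pos hm 3
  have hden : (0:ℝ) < 4 + 4 * p ^ 4 * q ^ 2 / m ^ 3 := by positivity
  have hD : (0:ℝ) < 4 * m ^ 3 + 4 * p ^ 4 * q ^ 2 := by positivity
  have hp2 : (0:ℝ) < 4 * (p ^ 2 + q ^ 2) := by positivity
  have hp4 : (0:ℝ) < 4 * (p ^ 4 + q ^ 4) := by positivity
  have h1 : p ^ 6 ≤ m ^ 3 := by
    calc p ^ 6 = (p ^ 2) ^ 3 := by ring
    _ ≤ m ^ 3 := pow_le_pow_left₀ (by positivity) hm1 3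
  have h2 : m ^ 3 ≤ q ^ 6 := by
    calc m ^ 3 ≤ (q ^ 2) ^ 3 := pow_le_pow_left₀ hm.le hm2 3
    _ = q ^ 6 := by ring
  have key : (4 - 2 * p ^ 4 * q ^ 2 / m ^ 3) / (4 + 4 * p ^ 4 * q ^ 2 / m ^ 3)
      = (4 * m ^ 3 - 2 * p ^ 4 * q ^ 2) / (4 * m ^ 3 + 4 * p ^ 4 * q ^ 2) := by
    rw [div_eq_div_iff hden.ne' hD.ne']
    field_simp
  have lhsEq : 1 / 4 - 3 / 4 * ((q ^ 2 - p ^ 2) / (p ^ 2 + q ^ 2))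
      = (4 * p ^ 2 - 2 * q ^ 2) / (4 * (p ^ 2 + q ^ 2)) := by
    field_simp
    ring
  have rhsEq : 1 / 4 + 3 / 4 * ((q ^ 4 - p ^ 4) / (p ^ 4 + q ^ 4))
      = (4 * q ^ 4 - 2 * p ^ 4) / (4 * (p ^ 4 + q ^ 4)) := by
    field_simp
    ring
  rw [key, lhsEq, rhsEq]
  constructor
  · rw [div_le_div_iff₀ hp2 hD]
    nlinarith [mul_nonneg (sub_nonneg.2 h1) (sq_nonneg q)]
  · rw [div_le_div_iff₀ hD hp4]
    nlinarith [mul_nonneg (sub_nonneg.2 h2) (pow_pos hp 4).le]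
end

section
/- Let p, q be positive real numbers with q ≤ p and p² < √2·q² < 2√2·p². For real m with q² ≤ m ≤ p² define k(m) := (4 − 2p⁴q²/m³)/(4 + 4p⁴q²/m³). Then for every such m: 1/4 − (3/4)·(p⁴ − q⁴)/(p⁴ + q⁴) ≤ k(m) ≤ 1/4 + (3/4)·(p² − q²)/(p² + q²). -/
/-- Pinching bounds for `O_{p,q}(1)` in the case `q ≤ p` (Lemma 6.4): with
`k(m) = (4 − 2p⁴q²/m³)/(4 + 4p⁴q²/m³)` and `q² ≤ m ≤ p²`,
`1/4 − (3/4)(p⁴ − q⁴)/(p⁴ + q⁴) ≤ k(m) ≤ 1/4 + (3/4)(p² − q²)/(p² + q²)`. -/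
theorem pinching_bounds_q_le_p (p q : ℝ) (hp : 0 < p) (hq : 0 < q) (hqp : q ≤ p)
    (h₁ : p ^ 2 < Real.sqrt 2 * q ^ 2) (h₂ : Real.sqrt 2 * q ^ 2 < 2 * Real.sqrt 2 * p ^ 2) :
    ∀ m : ℝ, q ^ 2 ≤ m → m ≤ p ^ 2 →
      1 / 4 - 3 / 4 * ((p ^ 4 - q ^ 4) / (p ^ 4 + q ^ 4))
          ≤ (4 - 2 * p ^ 4 * q ^ 2 / m ^ 3) / (4 + 4 * p ^ 4 * q ^ 2 / m ^ 3) ∧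
      (4 - 2 * p ^ 4 * q ^ 2 / m ^ 3) / (4 + 4 * p ^ 4 * q ^ 2 / m ^ 3)
          ≤ 1 / 4 + 3 / 4 * ((p ^ 2 - q ^ 2) / (p ^ 2 + q ^ 2)) := by
  intro m hql hpu
  have hq2 : 0 < q ^ 2 := pow_pos hq 2
  have hp2 : 0 < p ^ 2 := pow_pos hp 2
  have hq4 : 0 < q ^ 4 := pow_pos hq 4
  have hp4 : 0 < p ^ 4 := pow_pos hp 4
  have hm : 0 < m := lt_of_lt_of_le hq2 hql
  have hm3 : 0 < m ^ 3 := pow_pos hm 3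
  set t : ℝ := p ^ 4 * q ^ 2 / m ^ 3 with ht
  have ht0 : 0 < t := div_pos (by positivity) hm3
  have hmq : q ^ 6 ≤ m ^ 3 := by
    calc q ^ 6 = (q ^ 2) ^ 3 := by ring
      _ ≤ m ^ 3 := pow_le_pow_left₀ hq2.le hql 3
  have hmp : m ^ 3 ≤ p ^ 6 := by
    calc m ^ 3 ≤ (p ^ 2) ^ 3 := pow_le_pow_left₀ hm.le hpu 3
      _ = p ^ 6 := by ring
  have htu : t * q ^ 4 ≤ p ^ 4 := by
    rw [ht, div_mul_eq_mul_div, div_le_iff₀ hm3]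
    nlinarith
  have htl : q ^ 2 ≤ t * p ^ 2 := by
    rw [ht, div_mul_eq_mul_div, le_div_iff₀ hm3]
    nlinarith
  have hden : 0 < 4 + 4 * t := by linarith
  have e2 : 2 * p ^ 4 * q ^ 2 / m ^ 3 = 2 * t := by rw [ht]; ring
  have e4 : 4 * p ^ 4 * q ^ 2 / m ^ 3 = 4 * t := by rw [ht]; ring
  rw [e2, e4]
  constructor
  · have e : 1 / 4 - 3 / 4 * ((p ^ 4 - q ^ 4) / (p ^ 4 + q ^ 4))
        = (2 * q ^ 4 - p ^ 4) / (2 * (p ^ 4 + q ^ 4)) := by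
      field_simp; ring
    rw [e, div_le_div_iff₀ (by positivity) hden]
    nlinarith
  · have e : 1 / 4 + 3 / 4 * ((p ^ 2 - q ^ 2) / (p ^ 2 + q ^ 2))
        = (2 * p ^ 2 - q ^ 2) / (2 * (p ^ 2 + q ^ 2)) := by
      field_simp; ring
    rw [e, div_le_div_iff₀ hden (by positivity)]
    nlinarith
end

section
/- Let p, q be coprime natural numbers with p, q ≥ 1, and for real m with min(p²,q²) ≤ m ≤ max(p²,q²) define k(m) := (4 − 2p⁴q²/m³)/(4 + 4p⁴q²/m³). Then k(m) = 1/4 for all such m if and only if p = q = 1. -/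
/-- The pinching constant `k(m) = (4 − 2p⁴q²/m³)/(4 + 4p⁴q²/m³)` equals `1/4` for all
`m` with `min(p², q²) ≤ m ≤ max(p², q²)` if and only if `p = q = 1` (final assertion of
Lemma 6.4). -/
theorem pinching_quarter_iff_p_eq_q_eq_one (p q : ℕ) (hpq : Nat.Coprime p q)
    (hp : 1 ≤ p) (hq : 1 ≤ q) :
    (∀ m : ℝ, min ((p : ℝ) ^ 2) ((q : ℝ) ^ 2) ≤ m → m ≤ max ((p : ℝ) ^ 2) ((q : ℝ) ^ 2) →
        (4 - 2 * (p : ℝ) ^ 4 * (q : ℝ) ^ 2 / m ^ 3) /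
            (4 + 4 * (p : ℝ) ^ 4 * (q : ℝ) ^ 2 / m ^ 3) = 1 / 4) ↔
      p = 1 ∧ q = 1 := by
  have hpR : (0:ℝ) < (p:ℝ) := by exact_mod_cast hp
  have hqR : (0:ℝ) < (q:ℝ) := by exact_mod_cast hq
  constructor
  · intro h
    have h1 := h ((p:ℝ)^2) (min_le_left _ _) (le_max_left _ _)
    have hm3 : ((p:ℝ)^2)^3 > 0 := by positivity
    have hden : 4 + 4 * (p : ℝ) ^ 4 * (q : ℝ) ^ 2 / ((p:ℝ)^2) ^ 3 > 0 := by positivity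
    have hpq2 : (p:ℝ)^2 = (q:ℝ)^2 := by
      have := (div_eq_div_iff hden.ne' (by norm_num : (4:ℝ) ≠ 0)).mp h1
      field_simp at this
      nlinarith [sq_nonneg ((p:ℝ) - q), sq_nonneg ((p:ℝ) + q)]
    have hpqn : p = q := by
      have : (p:ℝ) = (q:ℝ) := by nlinarith
      exact_mod_cast this
    have hq1 : q = 1 := by
      have := hpq
      rw [hpqn] at this
      simpa [Nat.Coprime] using this
    exact ⟨hpqn ▸ hq1, hq1⟩
  · rintro ⟨rfl, rfl⟩
    intro m hm1 hm2
    have : m = 1 := le_antisymm (by simpa using hm2) (by simpa using hm1)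
    subst this
    norm_num
end
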